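/- Assume c ≠ 0. Let ω* > 0 and τ* ≥ 0 satisfy P(iω*) = 0 at delay τ = τ*, and suppose h′(ω*²) ≠ 0. If λ : I → ℂ is a differentiable function on an open interval I containing τ*, with λ(τ*) = iω* and P(λ(τ)) = 0 for every τ ∈ I (where in P the delay parameter equals τ), then the derivative of Re λ(τ) at τ = τ* is nonzero and has the same sign as h′(ω*²). -/

import Mathlib

noncomputable section

/-- Coefficient A = b₁+b₂−2a -/
def cA (a b₁ b₂ : ℝ) : ℝ := b₁ + b₂ - 2*a
/-- Coefficient B = b₁b₂−2a(b₁+b₂)+a²+2 -/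
def cB (a b₁ b₂ : ℝ) : ℝ := b₁*b₂ - 2*a*(b₁+b₂) + a^2 + 2
/-- Coefficient C = (a²+1)(b₁+b₂)−2ab₁b₂−2a -/
def cC (a b₁ b₂ : ℝ) : ℝ := (a^2+1)*(b₁+b₂) - 2*a*b₁*b₂ - 2*a
/-- Coefficient D = a²b₁b₂−a(b₁+b₂)+1 -/
def cD (a b₁ b₂ : ℝ) : ℝ := a^2*b₁*b₂ - a*(b₁+b₂) + 1
/-- Coefficient E = c² -/
def cE (c : ℝ) : ℝ := c^2
/-- P̂ = A²−2B -/
def qP (a b₁ b₂ c : ℝ) : ℝ := (cA a b₁ b₂)^2 - 2*(cB a b₁ b₂)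
/-- Q̂ = B²+2D−2AC−E² -/
def qQ (a b₁ b₂ c : ℝ) : ℝ :=
  (cB a b₁ b₂)^2 + 2*(cD a b₁ b₂) - 2*(cA a b₁ b₂)*(cC a b₁ b₂) - (cE c)^2
/-- R̂ = C²−2BD−E²(b₁²+b₂²) -/
def qR (a b₁ b₂ c : ℝ) : ℝ :=
  (cC a b₁ b₂)^2 - 2*(cB a b₁ b₂)*(cD a b₁ b₂) - (cE c)^2*(b₁^2+b₂^2)
/-- Ŝ = D²−E²(b₁b₂)² -/
def qS (a b₁ b₂ c : ℝ) : ℝ := (cD a b₁ b₂)^2 - (cE c)^2*(b₁*b₂)^2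
/-- Auxiliary quartic h(z) = z⁴+P̂z³+Q̂z²+R̂z+Ŝ -/
def hq (a b₁ b₂ c z : ℝ) : ℝ :=
  z^4 + qP a b₁ b₂ c * z^3 + qQ a b₁ b₂ c * z^2 + qR a b₁ b₂ c * z + qS a b₁ b₂ c
/-- Derivative h′(z) = 4z³+3P̂z²+2Q̂z+R̂ -/
def hq' (a b₁ b₂ c z : ℝ) : ℝ :=
  4*z^3 + 3*qP a b₁ b₂ c * z^2 + 2*qQ a b₁ b₂ c * z + qR a b₁ b₂ c
/-- Characteristic function P(λ) = λ⁴+Aλ³+Bλ²+Cλ+D − E(λ+b₁)(λ+b₂)e^{−2λτ} -/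
def charP (a b₁ b₂ c τ : ℝ) (z : ℂ) : ℂ :=
  z^4 + (cA a b₁ b₂ : ℂ)*z^3 + (cB a b₁ b₂ : ℂ)*z^2 + (cC a b₁ b₂ : ℂ)*z + (cD a b₁ b₂ : ℂ)
    - (cE c : ℂ) * (z + (b₁:ℂ)) * (z + (b₂:ℂ)) * Complex.exp (-(2*z*(τ:ℂ)))

theorem stmt_11 (a b₁ b₂ c : ℝ) (ha : 0 < a) (hb₁ : 0 < b₁) (hb₂ : 0 < b₂)
    (hc : c ≠ 0) (ωs τs : ℝ) (hωs : 0 < ωs) (hτs : 0 ≤ τs)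
    (hroot : charP a b₁ b₂ c τs (Complex.I * (ωs:ℂ)) = 0)
    (hder : hq' a b₁ b₂ c (ωs^2) ≠ 0)
    (I : Set ℝ) (hI : IsOpen I) (hmem : τs ∈ I)
    (lam : ℝ → ℂ) (hdiff : ∀ t ∈ I, DifferentiableAt ℝ lam t)
    (hinit : lam τs = Complex.I * (ωs:ℂ))
    (hchar : ∀ t ∈ I, charP a b₁ b₂ c t (lam t) = 0) :
    deriv (fun t => (lam t).re) τs ≠ 0 ∧
      (0 < deriv (fun t => (lam t).re) τs ↔ 0 < hq' a b₁ b₂ c (ωs^2)) := by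
  classical
  set A := cA a b₁ b₂ with hA
  set B := cB a b₁ b₂ with hB
  set C := cC a b₁ b₂ with hC
  set D := cD a b₁ b₂ with hD
  set E := cE c with hE
  have hL : HasDerivAt lam (deriv lam τs) τs := (hdiff τs hmem).hasDerivAt
  set L : ℂ := deriv lam τs with hLdef
  -- derivative of the real part
  have hLre : deriv (fun t => (lam t).re) τs = L.re := by
    have : HasDerivAt (fun t => (lam t).re) (Complex.reCLM L) τs :=
      Complex.reCLM.hasFDerivAt.comp_hasDerivAt τs hL
    simpa using this.deriv
  -- the composite characteristic function
  have hof : HasDerivAt (fun t : ℝ => (t : ℂ)) 1 τs := by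
    exact Complex.ofRealCLM.hasDerivAt (x := τs)
  set lc : ℂ := Complex.I * (ωs : ℂ) with hlc
  set X : ℂ := Complex.exp (-(2 * lc * (τs : ℂ))) with hX
  -- derivative of t ↦ charP a b₁ b₂ c t (lam t)
  have hF : HasDerivAt (fun t : ℝ => charP a b₁ b₂ c t (lam t))
      ((4*(lam τs*(lam τs*lam τs)) + 3*(A:ℂ)*(lam τs*lam τs) + 2*(B:ℂ)*lam τs + (C:ℂ)
          - ((E:ℂ)*(2*lam τs+(b₁:ℂ)+(b₂:ℂ))
              - 2*(τs:ℂ)*((E:ℂ)*(lam τs+(b₁:ℂ))*(lam τs+(b₂:ℂ))))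
            * Complex.exp (-(2 * lam τs * (τs:ℂ)))) * L
        + 2*lam τs*((E:ℂ)*(lam τs+(b₁:ℂ))*(lam τs+(b₂:ℂ)))
            * Complex.exp (-(2 * lam τs * (τs:ℂ)))) τs := by
    have h2 : HasDerivAt (fun t => lam t * lam t) (L * lam τs + lam τs * L) τs := hL.mul hL
    have h3 : HasDerivAt (fun t => lam t * (lam t * lam t))
        (L * (lam τs * lam τs) + lam τs * (L * lam τs + lam τs * L)) τs := hL.mul h2
    have h4 : HasDerivAt (fun t => lam t * (lam t * (lam t * lam t)))
        (L * (lam τs * (lam τs * lam τs))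
          + lam τs * (L * (lam τs * lam τs) + lam τs * (L * lam τs + lam τs * L))) τs :=
      hL.mul h3
    have hg : HasDerivAt (fun t : ℝ => -(2 * lam t * (t:ℂ)))
        (-((2*L) * (τs:ℂ) + (2*lam τs) * 1)) τs := ((hL.const_mul 2).mul hof).neg
    have hexp : HasDerivAt (fun t : ℝ => Complex.exp (-(2 * lam t * (t:ℂ))))
        (Complex.exp (-(2 * lam τs * (τs:ℂ))) * -((2*L) * (τs:ℂ) + (2*lam τs) * 1)) τs :=
      hg.cexp
    have hr1 : HasDerivAt (fun t => (E:ℂ) * (lam t + (b₁:ℂ)))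
        ((E:ℂ) * L) τs := (hL.add_const _).const_mul _
    have hr2 : HasDerivAt (fun t => (E:ℂ) * (lam t + (b₁:ℂ)) * (lam t + (b₂:ℂ)))
        ((E:ℂ) * L * (lam τs + (b₂:ℂ)) + (E:ℂ) * (lam τs + (b₁:ℂ)) * L) τs :=
      hr1.mul (hL.add_const _)
    have hr3 : HasDerivAt
        (fun t => (E:ℂ) * (lam t + (b₁:ℂ)) * (lam t + (b₂:ℂ))
            * Complex.exp (-(2 * lam t * (t:ℂ))))
        (((E:ℂ) * L * (lam τs + (b₂:ℂ)) + (E:ℂ) * (lam τs + (b₁:ℂ)) * L)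
            * Complex.exp (-(2 * lam τs * (τs:ℂ)))
          + (E:ℂ) * (lam τs + (b₁:ℂ)) * (lam τs + (b₂:ℂ))
            * (Complex.exp (-(2 * lam τs * (τs:ℂ))) * -((2*L) * (τs:ℂ) + (2*lam τs) * 1))) τs :=
      hr2.mul hexp
    have hpoly : HasDerivAt
        (fun t => lam t * (lam t * (lam t * lam t)) + (A:ℂ) * (lam t * (lam t * lam t))
            + (B:ℂ) * (lam t * lam t) + (C:ℂ) * lam t + (D:ℂ))
        ((L * (lam τs * (lam τs * lam τs))
            + lam τs * (L * (lam τs * lam τs) + lam τs * (L * lam τs + lam τs * L)))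
          + (A:ℂ) * (L * (lam τs * lam τs) + lam τs * (L * lam τs + lam τs * L))
          + (B:ℂ) * (L * lam τs + lam τs * L) + (C:ℂ) * L) τs := by
      simpa using
        ((((h4.add (h3.const_mul (A:ℂ))).add (h2.const_mul (B:ℂ))).add
          (hL.const_mul (C:ℂ))).add_const (D:ℂ))
    have htot := hpoly.sub hr3
    have hfun : (fun t : ℝ => charP a b₁ b₂ c t (lam t))
        = fun t => lam t * (lam t * (lam t * lam t)) + (A:ℂ) * (lam t * (lam t * lam t))
            + (B:ℂ) * (lam t * lam t) + (C:ℂ) * lam t + (D:ℂ)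
          - (E:ℂ) * (lam t + (b₁:ℂ)) * (lam t + (b₂:ℂ))
            * Complex.exp (-(2 * lam t * (t:ℂ))) := by
      funext t
      simp only [charP]
      rw [← hA, ← hB, ← hC, ← hD, ← hE]
      ring_nf
    rw [hfun]
    convert htot using 1
    · rfl
    · rfl
    ring
  -- the composite vanishes identically near τs, hence its derivative vanishes
  have hev : (fun t : ℝ => charP a b₁ b₂ c t (lam t)) =ᶠ[nhds τs] fun _ => (0:ℂ) := by
    filter_upwards [hI.mem_nhds hmem] with t ht using hchar t ht
  have hV0 : (4*(lam τs*(lam τs*lam τs)) + 3*(A:ℂ)*(lam τs*lam τs) + 2*(B:ℂ)*lam τs + (C:ℂ)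
          - ((E:ℂ)*(2*lam τs+(b₁:ℂ)+(b₂:ℂ))
              - 2*(τs:ℂ)*((E:ℂ)*(lam τs+(b₁:ℂ))*(lam τs+(b₂:ℂ))))
            * Complex.exp (-(2 * lam τs * (τs:ℂ)))) * L
        + 2*lam τs*((E:ℂ)*(lam τs+(b₁:ℂ))*(lam τs+(b₂:ℂ)))
            * Complex.exp (-(2 * lam τs * (τs:ℂ))) = 0 := by
    have h1 := hF.deriv
    have h2 := hev.deriv_eq
    rw [h1] at h2
    simpa using h2
  rw [hinit] at hV0
  -- abbreviations at the critical point
  set q : ℂ := lc*(lc*(lc*lc)) + (A:ℂ)*(lc*(lc*lc)) + (B:ℂ)*(lc*lc) + (C:ℂ)*lc + (D:ℂ)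
    with hq_def
  set r : ℂ := (E:ℂ)*(lc+(b₁:ℂ))*(lc+(b₂:ℂ)) with hr_def
  set qd : ℂ := 4*(lc*(lc*lc)) + 3*(A:ℂ)*(lc*lc) + 2*(B:ℂ)*lc + (C:ℂ) with hqd_def
  set rd : ℂ := (E:ℂ)*(2*lc+(b₁:ℂ)+(b₂:ℂ)) with hrd_def
  set qdb : ℂ := -(4*(lc*(lc*lc))) + 3*(A:ℂ)*(lc*lc) - 2*(B:ℂ)*lc + (C:ℂ) with hqdb_def
  set rb : ℂ := (E:ℂ)*((b₁:ℂ)-lc)*((b₂:ℂ)-lc) with hrb_def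
  set rdb : ℂ := (E:ℂ)*((b₁:ℂ)+(b₂:ℂ)-2*lc) with hrdb_def
  set Pl : ℂ := qd - (rd - 2*(τs:ℂ)*r)*X with hPl_def
  set Pt : ℂ := 2*lc*r*X with hPt_def
  -- the linear relation  Pl * L + Pt = 0
  have hlin : Pl * L + Pt = 0 := hV0
  -- |X| = 1
  have hx1 : X * (starRingEnd ℂ) X = 1 := by
    rw [Complex.mul_conj, Complex.normSq_eq_norm_sq, hX, Complex.norm_exp]
    rw [hlc]
    norm_num [Complex.ofReal_mul]
  -- root relation  q = r * X
  have hqr : q = r * X := by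
    rw [hq_def, hr_def, hX, hlc]
    rw [charP] at hroot
    linear_combination hroot
  -- conjugates
  have hcPl : (starRingEnd ℂ) Pl = qdb - (rdb - 2*(τs:ℂ)*rb) * (starRingEnd ℂ) X := by
    rw [hPl_def, hqd_def, hrd_def, hr_def, hqdb_def, hrdb_def, hrb_def, hlc]
    simp only [map_sub, map_add, map_mul, map_neg, map_ofNat, Complex.conj_ofReal,
      Complex.conj_I]
    ring
  have hcq : (starRingEnd ℂ) q =
      lc*(lc*(lc*lc)) - (A:ℂ)*(lc*(lc*lc)) + (B:ℂ)*(lc*lc) - (C:ℂ)*lc + (D:ℂ) := by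
    rw [hq_def, hlc]
    simp only [map_add, map_mul, Complex.conj_ofReal, Complex.conj_I]
    ring
  -- nonvanishing of Pt
  have hlc0 : lc ≠ 0 := by
    rw [hlc]
    simp [Complex.ext_iff, hωs.ne']
  have hb1c : lc + (b₁:ℂ) ≠ 0 := by
    intro h
    have := congrArg Complex.im h
    rw [hlc] at this
    simp at this
    exact hωs.ne' this
  have hb2c : lc + (b₂:ℂ) ≠ 0 := by
    intro h
    have := congrArg Complex.im h
    rw [hlc] at this
    simp at this
    exact hωs.ne' this
  have hE0 : (E:ℂ) ≠ 0 := by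
    simp only [hE, cE, ne_eq, Complex.ofReal_eq_zero]
    positivity
  have hr0 : r ≠ 0 := by
    rw [hr_def]
    exact mul_ne_zero (mul_ne_zero hE0 hb1c) hb2c
  have hPt0 : Pt ≠ 0 := by
    rw [hPt_def]
    exact mul_ne_zero (mul_ne_zero (mul_ne_zero two_ne_zero hlc0) hr0) (Complex.exp_ne_zero _)
  have hPl0 : Pl ≠ 0 := by
    intro h
    apply hPt0
    have := hlin
    rw [h, zero_mul, zero_add] at this
    exact this
  -- the key complex identity
  have hkey : -Pt * (starRingEnd ℂ) Pl
      = 2*lc*(r*rdb) - 4*(τs:ℂ)*lc*(r*rb) - 2*lc*(q*qdb) := by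
    rw [hcPl, hPt_def]
    linear_combination (2*lc*qdb) * hqr + (2*lc*r*rdb - 4*(τs:ℂ)*lc*r*rb) * hx1
  -- its real part
  have hreB : (2*lc*(r*rdb) - 4*(τs:ℂ)*lc*(r*rb) - 2*lc*(q*qdb)).re
      = 2*ωs^2 * hq' a b₁ b₂ c (ωs^2) := by
    rw [hq_def, hr_def, hqdb_def, hrdb_def, hrb_def, hlc]
    simp only [Complex.mul_re, Complex.mul_im, Complex.add_re, Complex.add_im,
      Complex.sub_re, Complex.sub_im, Complex.neg_re, Complex.neg_im,
      Complex.ofReal_re, Complex.ofReal_im, Complex.I_re, Complex.I_im,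
      Complex.re_ofNat, Complex.im_ofNat]
    rw [hq', qP, qQ, qR, ← hA, ← hB, ← hC, ← hD, ← hE]
    ring
  -- combine
  have hnsq : (0:ℝ) < Complex.normSq Pl := Complex.normSq_pos.mpr hPl0
  have hmain : Complex.normSq Pl * L.re = 2*ωs^2 * hq' a b₁ b₂ c (ωs^2) := by
    have hmul : ((Complex.normSq Pl : ℝ) : ℂ) * L = -Pt * (starRingEnd ℂ) Pl := by
      rw [← Complex.mul_conj]
      linear_combination (starRingEnd ℂ) Pl * hlin
    have := congrArg Complex.re hmul
    rw [hkey, hreB] at this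
    simpa [Complex.mul_re] using this
  rw [hLre]
  constructor
  · intro h
    rw [h, mul_zero] at hmain
    apply hder
    have hω2 : (0:ℝ) < ωs^2 := by positivity
    nlinarith [hmain]
  · constructor
    · intro h
      nlinarith [hmain, hnsq, sq_nonneg ωs, hωs]
    · intro h
      nlinarith [hmain, hnsq, hωs, sq_nonneg ωs, mul_pos hωs hωs]
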